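/- In the ring ℚ[[s₁,s₂,t₁,t₂,x,y]] of formal power series over ℚ in six variables, define for i,j ∈ {1,2} the series R_{ij} = (1 + s_i·t_j·x·y) · (1 − s₁s₂t₁t₂x²y²)^{-1}. Then (R_{ij}) is the unique quadruple of power series satisfying the system R_{11} = 1 + s₁t₁xy·R_{22}, R_{22} = 1 + s₂t₂xy·R_{11}, R_{12} = 1 + s₁t₂xy·R_{21}, R_{21} = 1 + s₂t₁xy·R_{12}; consequently R_{11}·R_{12}·R_{21}·R_{22} = (1+s₁t₁xy)(1+s₁t₂xy)(1+s₂t₁xy)(1+s₂t₂xy) · (1 − s₁s₂t₁t₂x²y²)^{-4}. -/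

import Mathlib

open MvPowerSeries

/-- In `ℚ[[s₁,s₂,t₁,t₂,x,y]]`, the quadruple
`R_{ij} = (1 + sᵢtⱼxy)·(1 − s₁s₂t₁t₂x²y²)⁻¹` is the unique solution of the system
`R_{ij} = 1 + sᵢtⱼxy·R_{i+1,j+1}` (indices mod 2), and consequently
`∏ R_{ij} = ∏(1 + sᵢtⱼxy) · (1 − s₁s₂t₁t₂x²y²)⁻⁴`. -/
theorem K22_small_length
    (s t : Fin 2 → MvPowerSeries (Fin 6) ℚ) (x y : MvPowerSeries (Fin 6) ℚ)
    (hs : s = fun i => MvPowerSeries.X (Fin.castLE (by norm_num) i))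
    (ht : t = fun j => MvPowerSeries.X ((2 : Fin 6) + Fin.castLE (by norm_num) j))
    (hx : x = MvPowerSeries.X 4) (hy : y = MvPowerSeries.X 5)
    (R : Fin 2 → Fin 2 → MvPowerSeries (Fin 6) ℚ)
    (hR : R = fun i j =>
      (1 + s i * t j * x * y) * (1 - s 0 * s 1 * t 0 * t 1 * x ^ 2 * y ^ 2)⁻¹) :
    (∀ i j : Fin 2, R i j = 1 + s i * t j * x * y * R (i + 1) (j + 1)) ∧
    (∀ R' : Fin 2 → Fin 2 → MvPowerSeries (Fin 6) ℚ,
      (∀ i j : Fin 2, R' i j = 1 + s i * t j * x * y * R' (i + 1) (j + 1)) → R' = R) ∧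
    (R 0 0 * R 0 1 * R 1 0 * R 1 1 =
      (1 + s 0 * t 0 * x * y) * (1 + s 0 * t 1 * x * y) *
        (1 + s 1 * t 0 * x * y) * (1 + s 1 * t 1 * x * y) *
          ((1 - s 0 * s 1 * t 0 * t 1 * x ^ 2 * y ^ 2)⁻¹) ^ 4) := by
  set A : MvPowerSeries (Fin 6) ℚ := 1 - s 0 * s 1 * t 0 * t 1 * x ^ 2 * y ^ 2 with hA
  have hc : constantCoeff A ≠ 0 := by
    subst hs ht hx hy
    simp [hA]
  have hinv : A * A⁻¹ = 1 := MvPowerSeries.mul_inv_cancel _ hc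
  refine ⟨?_, ?_, ?_⟩
  · intro i j
    fin_cases i <;> fin_cases j <;>
      · simp only [hR, Fin.mk_zero, Fin.mk_one, show (0:Fin 2)+1 = 1 from rfl,
          show (1:Fin 2)+1 = 0 from rfl]
        linear_combination hinv
  · intro R' hR'
    funext i j
    fin_cases i <;> fin_cases j
    · have h1 := hR' 0 0
      have h2 := hR' 1 1
      simp only [show (0:Fin 2)+1 = 1 from rfl, show (1:Fin 2)+1 = 0 from rfl] at h1 h2
      simp only [hR, Fin.mk_zero, Fin.mk_one]
      linear_combination A⁻¹ * h1 + (A⁻¹ * (s 0 * t 0 * x * y)) * h2 - R' 0 0 * hinv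
    · have h1 := hR' 0 1
      have h2 := hR' 1 0
      simp only [show (0:Fin 2)+1 = 1 from rfl, show (1:Fin 2)+1 = 0 from rfl] at h1 h2
      simp only [hR, Fin.mk_zero, Fin.mk_one]
      linear_combination A⁻¹ * h1 + (A⁻¹ * (s 0 * t 1 * x * y)) * h2 - R' 0 1 * hinv
    · have h1 := hR' 1 0
      have h2 := hR' 0 1
      simp only [show (0:Fin 2)+1 = 1 from rfl, show (1:Fin 2)+1 = 0 from rfl] at h1 h2
      simp only [hR, Fin.mk_zero, Fin.mk_one]
      linear_combination A⁻¹ * h1 + (A⁻¹ * (s 1 * t 0 * x * y)) * h2 - R' 1 0 * hinv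
    · have h1 := hR' 1 1
      have h2 := hR' 0 0
      simp only [show (0:Fin 2)+1 = 1 from rfl, show (1:Fin 2)+1 = 0 from rfl] at h1 h2
      simp only [hR, Fin.mk_zero, Fin.mk_one]
      linear_combination A⁻¹ * h1 + (A⁻¹ * (s 1 * t 1 * x * y)) * h2 - R' 1 1 * hinv
  · simp only [hR]
    ring
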